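/- Let n > 0, x > 0, δ ∈ ℝ and y = x²/(n+x²). Then R_n(x;δ) = (1/2) e^{-δ²/2} Σ_{j=0}^∞ (−δ/√2)^j / Γ(j/2 + 1) · I_{1−y}(n/2, (1+j)/2). -/

import Mathlib

open Real MeasureTheory

/-- Complementary error function. -/
noncomputable def erfc (z : ℝ) : ℝ := (2 / Real.sqrt π) * ∫ t in Set.Ioi z, Real.exp (-t^2)

/-- Error function. -/
noncomputable def erf (z : ℝ) : ℝ := 1 - erfc z

/-- Beta function B(a,b) = Γ(a)Γ(b)/Γ(a+b). -/
noncomputable def betaFn (a b : ℝ) : ℝ := Real.Gamma a * Real.Gamma b / Real.Gamma (a + b)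

/-- Regularized incomplete beta function I_y(a,b). -/
noncomputable def regIncBeta (y a b : ℝ) : ℝ :=
  (1 / betaFn a b) * ∫ t in (0:ℝ)..y, t ^ (a - 1) * (1 - t) ^ (b - 1)

/-- The function P_n(x;δ). -/
noncomputable def Pnt (n x δ : ℝ) : ℝ :=
  (1/2) * Real.exp (-δ^2/2) *
    ∑' j : ℕ, ((δ^2/2)^j / (Nat.factorial j : ℝ)) *
      regIncBeta (x^2/(n + x^2)) ((j : ℝ) + 1/2) (n/2)

/-- The function Q_n(x;δ). -/
noncomputable def Qnt (n x δ : ℝ) : ℝ :=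
  (1/2) * Real.exp (-δ^2/2) *
    ∑' j : ℕ, (δ / Real.sqrt 2) * ((δ^2/2)^j / Real.Gamma ((j : ℝ) + 3/2)) *
      regIncBeta (x^2/(n + x^2)) ((j : ℝ) + 1) (n/2)

/-- The noncentral t cumulative distribution function F_n(x;δ). -/
noncomputable def Fnt (n x δ : ℝ) : ℝ :=
  (1/2) * erfc (δ / Real.sqrt 2) + Pnt n x δ + Qnt n x δ

/-- The function R_n(x;δ) = erfc(δ/√2)/2 + Q_n(x;δ) − P_n(x;δ). -/
noncomputable def Rnt (n x δ : ℝ) : ℝ :=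
  (1/2) * erfc (δ / Real.sqrt 2) + Qnt n x δ - Pnt n x δ

/-- Kummer's confluent hypergeometric function ₁F₁(a;b;z). -/
noncomputable def kummerM (a b z : ℝ) : ℝ :=
  ∑' k : ℕ, (Real.Gamma (a + k) / Real.Gamma a) / (Real.Gamma (b + k) / Real.Gamma b) *
    z^k / (Nat.factorial k : ℝ)


section Aux
open intervalIntegral

lemma betaII (a b : ℝ) (ha : 0 < a) (hb : 0 < b) :
    IntervalIntegrable (fun t => t ^ (a-1) * (1-t) ^ (b-1)) volume 0 1 := by
  have h1 : IntervalIntegrable (fun t => t ^ (a-1) * (1-t) ^ (b-1)) volume 0 (1/2) := by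
    apply (intervalIntegrable_rpow' (by linarith)).mul_continuousOn
    apply ContinuousOn.rpow_const (by fun_prop)
    intro t ht
    rw [Set.uIcc_of_le (by norm_num)] at ht
    left; intro h
    nlinarith [sub_eq_zero.mp h, ht.2]
  have h2 : IntervalIntegrable (fun t => t ^ (a-1) * (1-t) ^ (b-1)) volume (1/2) 1 := by
    have base : IntervalIntegrable (fun t : ℝ => t ^ (b-1)) volume 0 (1/2) :=
      intervalIntegrable_rpow' (by linarith)
    have h' := (base.comp_sub_left 1).symm
    norm_num at h'
    apply IntervalIntegrable.continuousOn_mul h'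
    apply ContinuousOn.rpow_const (by fun_prop)
    intro t ht
    rw [Set.uIcc_of_le (by norm_num)] at ht
    left; intro h; rw [h] at ht; norm_num at ht
  exact h1.trans h2

lemma betaFn_pos {a b : ℝ} (ha : 0 < a) (hb : 0 < b) : 0 < betaFn a b := by
  unfold betaFn
  have := Real.Gamma_pos_of_pos ha
  have := Real.Gamma_pos_of_pos hb
  have := Real.Gamma_pos_of_pos (by linarith : (0:ℝ) < a + b)
  positivity

lemma beta_integral_full (a b : ℝ) (ha : 0 < a) (hb : 0 < b) :
    ∫ t in (0:ℝ)..1, t ^ (a-1) * (1-t) ^ (b-1) = betaFn a b := by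
  have key := Complex.Gamma_mul_Gamma_eq_betaIntegral
    (s := (a:ℂ)) (t := (b:ℂ)) (by simpa using ha) (by simpa using hb)
  have hint : Complex.betaIntegral (a:ℂ) (b:ℂ)
      = ((∫ t in (0:ℝ)..1, t ^ (a-1) * (1-t) ^ (b-1) : ℝ) : ℂ) := by
    rw [Complex.betaIntegral, ← intervalIntegral.integral_ofReal]
    apply intervalIntegral.integral_congr
    intro t ht
    rw [Set.uIcc_of_le (by norm_num)] at ht
    simp only
    rw [show ((a:ℂ)-1) = ((a-1:ℝ):ℂ) by push_cast; ring,
      show ((b:ℂ)-1) = ((b-1:ℝ):ℂ) by push_cast; ring,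
      ← Complex.ofReal_cpow ht.1,
      show (1 - (t:ℂ)) = ((1 - t : ℝ) : ℂ) by push_cast; ring,
      ← Complex.ofReal_cpow (by linarith [ht.2] : (0:ℝ) ≤ 1 - t)]
    push_cast
    ring
  rw [hint] at key
  have hab : Complex.Gamma ((a:ℂ) + b) ≠ 0 := by
    rw [← Complex.ofReal_add, Complex.Gamma_ofReal]
    simp only [ne_eq, Complex.ofReal_eq_zero]
    exact (Real.Gamma_pos_of_pos (by linarith)).ne'
  have : ((betaFn a b : ℝ) : ℂ) = ((∫ t in (0:ℝ)..1, t ^ (a-1) * (1-t) ^ (b-1) : ℝ) : ℂ) := by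
    rw [betaFn]
    push_cast
    rw [← Complex.Gamma_ofReal, ← Complex.Gamma_ofReal, ← Complex.Gamma_ofReal,
      Complex.ofReal_add, div_eq_iff hab, key]
    ring
  exact_mod_cast this.symm

lemma betaII_sub {a b y z : ℝ} (ha : 0 < a) (hb : 0 < b) (h0 : 0 ≤ y) (h1 : z ≤ 1)
    (hyz : y ≤ z) :
    IntervalIntegrable (fun t => t ^ (a-1) * (1-t) ^ (b-1)) volume y z :=
  (betaII a b ha hb).mono_set (by
    rw [Set.uIcc_of_le hyz, Set.uIcc_of_le (by norm_num : (0:ℝ) ≤ 1)]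
    exact Set.Icc_subset_Icc h0 h1)

lemma regIncBeta_compl {a b y : ℝ} (ha : 0 < a) (hb : 0 < b) (h0 : 0 ≤ y) (h1 : y ≤ 1) :
    regIncBeta (1-y) b a = 1 - regIncBeta y a b := by
  have hsub : (∫ t in (0:ℝ)..(1-y), t ^ (b-1) * (1-t) ^ (a-1))
      = ∫ t in y..1, t ^ (a-1) * (1-t) ^ (b-1) := by
    have := intervalIntegral.integral_comp_sub_left
      (a := (0:ℝ)) (b := 1-y) (fun t => t ^ (a-1) * (1-t) ^ (b-1)) 1
    norm_num at this
    rw [← this]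
    apply intervalIntegral.integral_congr
    intro t ht; simp only; ring_nf
  have hadd : (∫ t in (0:ℝ)..y, t ^ (a-1) * (1-t) ^ (b-1))
      + (∫ t in y..1, t ^ (a-1) * (1-t) ^ (b-1))
      = ∫ t in (0:ℝ)..1, t ^ (a-1) * (1-t) ^ (b-1) :=
    intervalIntegral.integral_add_adjacent_intervals
      (betaII_sub ha hb le_rfl h1 h0) (betaII_sub ha hb h0 le_rfl h1)
  have hBsymm : betaFn b a = betaFn a b := by unfold betaFn; rw [mul_comm, add_comm]
  have hB := betaFn_pos ha hb
  rw [regIncBeta, regIncBeta, hsub, hBsymm, beta_integral_full a b ha hb] at *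
  field_simp
  linarith [hadd]

lemma regIncBeta_nonneg {a b y : ℝ} (ha : 0 < a) (hb : 0 < b) (h0 : 0 ≤ y) (h1 : y ≤ 1) :
    0 ≤ regIncBeta y a b := by
  have hB := betaFn_pos ha hb
  apply mul_nonneg (by positivity)
  apply intervalIntegral.integral_nonneg h0
  intro t ht
  have h2 : (0:ℝ) ≤ 1 - t := by linarith [ht.2]
  exact mul_nonneg (Real.rpow_nonneg ht.1 _) (Real.rpow_nonneg h2 _)

lemma regIncBeta_le_one {a b y : ℝ} (ha : 0 < a) (hb : 0 < b) (h0 : 0 ≤ y) (h1 : y ≤ 1) :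
    regIncBeta y a b ≤ 1 := by
  have h := regIncBeta_compl ha hb h0 h1
  have := regIncBeta_nonneg hb ha (by linarith : (0:ℝ) ≤ 1 - y) (by linarith)
  linarith

lemma Real.exp_tsum (x : ℝ) : Real.exp x = ∑' n : ℕ, x ^ n / (Nat.factorial n : ℝ) := by
  rw [Real.exp_eq_exp_ℝ, NormedSpace.exp_eq_tsum_div]

lemma Gamma_pos_aux (k : ℕ) : 0 < Real.Gamma ((k:ℝ) + 3/2) :=
  Real.Gamma_pos_of_pos (by positivity)

lemma Gamma_succ_aux (k : ℕ) :
    Real.Gamma (((k:ℕ):ℝ) + 1 + 3/2) = ((k:ℝ) + 3/2) * Real.Gamma ((k:ℝ) + 3/2) := by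
  rw [show ((k:ℝ) + 1 + 3/2) = ((k:ℝ) + 3/2) + 1 by ring, Real.Gamma_add_one (by positivity)]

lemma Gamma_three_halves : Real.Gamma (3/2 : ℝ) = Real.sqrt π / 2 := by
  rw [show (3/2 : ℝ) = 1/2 + 1 by norm_num, Real.Gamma_add_one (by norm_num),
    Real.Gamma_one_half_eq]
  ring

lemma Gamma_ge_factorial (k : ℕ) :
    (Real.sqrt π / 2) * (Nat.factorial k : ℝ) ≤ Real.Gamma ((k:ℝ) + 3/2) := by
  induction k with
  | zero => simp [Gamma_three_halves]
  | succ k ih =>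
    have h := Gamma_succ_aux k
    push_cast [Nat.factorial_succ]
    push_cast at h
    rw [h]
    have h1 : (0:ℝ) < Real.sqrt π / 2 := by positivity
    have h2 : (0:ℝ) ≤ (k:ℝ) + 1 := by positivity
    nlinarith [(by positivity : (0:ℝ) < (Nat.factorial k : ℝ)), Gamma_pos_aux k]

lemma summable_S (z : ℝ) : Summable (fun k : ℕ => z^(2*k+1) / Real.Gamma ((k:ℝ) + 3/2)) := by
  apply Summable.of_norm_bounded
    (g := fun k : ℕ => (2 / Real.sqrt π * |z|) * ((z^2)^k / (Nat.factorial k : ℝ)))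
    (((Real.summable_pow_div_factorial (z^2)).mul_left _))
  intro k
  rw [Real.norm_eq_abs, abs_div, abs_of_pos (Gamma_pos_aux k)]
  have h1 := Gamma_ge_factorial k
  have h2 : (0:ℝ) < Real.sqrt π / 2 := by positivity
  have h3 : (0:ℝ) < (Nat.factorial k : ℝ) := by positivity
  have h4 : |z^(2*k+1)| = |z| * (z^2)^k := by
    rw [pow_succ', abs_mul, pow_mul, abs_pow, abs_of_nonneg (sq_nonneg z)]
  rw [h4]
  rw [div_le_iff₀ (Gamma_pos_aux k)]
  have h5 : (2 / Real.sqrt π * |z|) * ((z^2)^k / (Nat.factorial k : ℝ)) * ((Real.sqrt π / 2) * (Nat.factorial k : ℝ)) = |z| * (z^2)^k := by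
    field_simp
  calc |z| * (z^2)^k
      = (2 / Real.sqrt π * |z|) * ((z^2)^k / (Nat.factorial k : ℝ)) * ((Real.sqrt π / 2) * (Nat.factorial k : ℝ)) := h5.symm
    _ ≤ _ := by
        apply mul_le_mul_of_nonneg_left h1
        positivity

lemma two_k_bound (k : ℕ) : ((2*k+1 : ℕ) : ℝ) ≤ 2 * 4^k := by
  induction k with
  | zero => norm_num
  | succ k ih =>
    have : (0:ℝ) < 4^k := by positivity
    push_cast at ih ⊢
    rw [pow_succ]
    have h4 : (1:ℝ) ≤ 4^k := one_le_pow₀ (by norm_num)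
    nlinarith

lemma summable_S' (R : ℝ) (hR : 0 ≤ R) :
    Summable (fun k : ℕ => ((2*k+1 : ℕ) : ℝ) * R^(2*k) / Real.Gamma ((k:ℝ) + 3/2)) := by
  apply Summable.of_norm_bounded
    (g := fun k : ℕ => (4 / Real.sqrt π) * ((4*R^2)^k / (Nat.factorial k : ℝ)))
    (((Real.summable_pow_div_factorial (4*R^2)).mul_left _))
  intro k
  have hG := Gamma_pos_aux k
  have h1 := Gamma_ge_factorial k
  have h3 : (0:ℝ) < (Nat.factorial k : ℝ) := by positivity
  have hsp : (0:ℝ) < Real.sqrt π := by positivity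
  rw [Real.norm_eq_abs, abs_of_nonneg (by positivity), div_le_iff₀ hG]
  have e1 : (4 / Real.sqrt π) * ((4*R^2)^k / (Nat.factorial k : ℝ)) * ((Real.sqrt π / 2) * (Nat.factorial k : ℝ)) = 2 * 4^k * R^(2*k) := by
    rw [mul_pow, pow_mul]
    field_simp
    ring
  calc ((2*k+1 : ℕ) : ℝ) * R^(2*k) ≤ 2 * 4^k * R^(2*k) := by
        apply mul_le_mul_of_nonneg_right (two_k_bound k) (by positivity)
    _ = (4 / Real.sqrt π) * ((4*R^2)^k / (Nat.factorial k : ℝ)) * ((Real.sqrt π / 2) * (Nat.factorial k : ℝ)) := e1.symm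
    _ ≤ _ := by
        apply mul_le_mul_of_nonneg_left h1
        positivity

lemma hasDerivAt_S (z : ℝ) :
    HasDerivAt (fun y : ℝ => ∑' k : ℕ, y^(2*k+1) / Real.Gamma ((k:ℝ) + 3/2))
      (∑' k : ℕ, ((2*k+1 : ℕ) : ℝ) * z^(2*k) / Real.Gamma ((k:ℝ) + 3/2)) z := by
  set R := |z| + 1 with hR
  have hR0 : (0:ℝ) ≤ R := by positivity
  apply hasDerivAt_tsum_of_isPreconnected (summable_S' R hR0)
    (Metric.isOpen_ball (x := (0:ℝ)) (ε := R))
    ((convex_ball (0:ℝ) R).isPreconnected)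
    (g := fun (k : ℕ) (y : ℝ) => y^(2*k+1) / Real.Gamma ((k:ℝ) + 3/2))
    (g' := fun (k : ℕ) (y : ℝ) => ((2*k+1 : ℕ) : ℝ) * y^(2*k) / Real.Gamma ((k:ℝ) + 3/2))
    (y₀ := 0)
  · intro k y hy
    simpa using (hasDerivAt_pow (2*k+1) y).div_const (Real.Gamma ((k:ℝ) + 3/2))
  · intro k y hy
    have hyR : |y| ≤ R := by
      rw [Metric.mem_ball, Real.dist_eq, sub_zero] at hy
      linarith
    have hG := Gamma_pos_aux k
    rw [Real.norm_eq_abs, abs_div, abs_of_pos hG, abs_mul, abs_pow, Nat.abs_cast]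
    have hp : |y|^(2*k) ≤ R^(2*k) := pow_le_pow_left₀ (abs_nonneg y) hyR _
    gcongr
  · simp [Real.dist_eq, hR]
    positivity
  · exact summable_S 0
  · simp [Real.dist_eq, hR]

lemma summable_S'z (z : ℝ) :
    Summable (fun k : ℕ => ((2*k+1 : ℕ) : ℝ) * z^(2*k) / Real.Gamma ((k:ℝ) + 3/2)) := by
  apply Summable.of_norm_bounded
    (g := fun k : ℕ => ((2*k+1 : ℕ) : ℝ) * |z|^(2*k) / Real.Gamma ((k:ℝ) + 3/2))
    (summable_S' |z| (abs_nonneg z))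
  intro k
  rw [Real.norm_eq_abs, abs_div, abs_of_pos (Gamma_pos_aux k), abs_mul, abs_pow, Nat.abs_cast]

lemma S'_eq (z : ℝ) :
    ∑' k : ℕ, ((2*k+1 : ℕ) : ℝ) * z^(2*k) / Real.Gamma ((k:ℝ) + 3/2)
      = 2 / Real.sqrt π + 2 * z * ∑' k : ℕ, z^(2*k+1) / Real.Gamma ((k:ℝ) + 3/2) := by
  rw [Summable.tsum_eq_zero_add (summable_S'z z)]
  have h0 : ((2*0+1 : ℕ) : ℝ) * z^(2*0) / Real.Gamma (((0:ℕ):ℝ) + 3/2) = 2 / Real.sqrt π := by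
    have hsp : (0:ℝ) < Real.sqrt π := by positivity
    norm_num [Gamma_three_halves]
    try rw [div_div_eq_mul_div, div_eq_div_iff (by positivity) (by positivity)]
    try ring
    try field_simp
  rw [h0]
  congr 1
  have hterm : ∀ k : ℕ, ((2*(k+1)+1 : ℕ) : ℝ) * z^(2*(k+1)) / Real.Gamma (((k+1:ℕ):ℝ) + 3/2)
      = (2*z) * (z^(2*k+1) / Real.Gamma ((k:ℝ) + 3/2)) := by
    intro k
    have hG := Gamma_succ_aux k
    push_cast at hG ⊢
    rw [show ((k:ℝ) + 1 + 3/2) = (k:ℝ) + 1 + 3/2 from rfl, hG]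
    have h1 : (0:ℝ) < (k:ℝ) + 3/2 := by positivity
    have h2 := (Gamma_pos_aux k).ne'
    field_simp
    ring
  rw [tsum_congr hterm, tsum_mul_left]

lemma integrable_gauss : Integrable (fun t : ℝ => Real.exp (-t^2)) := by
  have := integrable_exp_neg_mul_sq (b := 1) one_pos
  simpa using this

lemma Ioi_split (z : ℝ) : (∫ t in Set.Ioi z, Real.exp (-t^2))
    = (∫ t in Set.Ioi (0:ℝ), Real.exp (-t^2)) - ∫ t in (0:ℝ)..z, Real.exp (-t^2) := by
  rcases le_or_gt 0 z with hz | hz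
  · rw [intervalIntegral.integral_of_le hz]
    have hu : Set.Ioc 0 z ∪ Set.Ioi z = Set.Ioi (0:ℝ) := Set.Ioc_union_Ioi_eq_Ioi hz
    have := MeasureTheory.setIntegral_union (f := fun t : ℝ => Real.exp (-t^2)) (μ := volume)
      (s := Set.Ioc 0 z) (t := Set.Ioi z) (Set.Ioc_disjoint_Ioi le_rfl)
      measurableSet_Ioi (integrable_gauss.integrableOn) (integrable_gauss.integrableOn)
    rw [hu] at this
    rw [this]; ring
  · rw [intervalIntegral.integral_of_ge hz.le]
    have hu : Set.Ioc z 0 ∪ Set.Ioi 0 = Set.Ioi z := Set.Ioc_union_Ioi_eq_Ioi hz.le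
    have := MeasureTheory.setIntegral_union (f := fun t : ℝ => Real.exp (-t^2)) (μ := volume)
      (s := Set.Ioc z 0) (t := Set.Ioi 0) (Set.Ioc_disjoint_Ioi le_rfl)
      measurableSet_Ioi (integrable_gauss.integrableOn) (integrable_gauss.integrableOn)
    rw [hu] at this
    rw [this]; ring

lemma erfc_zero : erfc 0 = 1 := by
  rw [erfc]
  have : (∫ t in Set.Ioi (0:ℝ), Real.exp (-t^2)) = Real.sqrt π / 2 := by
    have := integral_gaussian_Ioi 1
    norm_num at this
    simpa using this
  rw [this]
  have : Real.sqrt π ≠ 0 := by positivity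
  field_simp

lemma erf_eq (z : ℝ) : erf z = (2 / Real.sqrt π) * ∫ t in (0:ℝ)..z, Real.exp (-t^2) := by
  rw [erf, erfc, Ioi_split]
  have h1 : (2 / Real.sqrt π) * (∫ t in Set.Ioi (0:ℝ), Real.exp (-t^2)) = erfc 0 := rfl
  rw [mul_sub, h1, erfc_zero]
  ring

lemma erf_zero : erf 0 = 0 := by simp [erf_eq]

lemma hasDerivAt_erf (z : ℝ) :
    HasDerivAt erf ((2 / Real.sqrt π) * Real.exp (-z^2)) z := by
  have h : HasDerivAt (fun u : ℝ => ∫ t in (0:ℝ)..u, Real.exp (-t^2)) (Real.exp (-z^2)) z := by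
    have hc : Continuous (fun t : ℝ => Real.exp (-t^2)) := by continuity
    apply intervalIntegral.integral_hasDerivAt_right
      (hc.intervalIntegrable _ _)
      (hc.stronglyMeasurable.stronglyMeasurableAtFilter)
      hc.continuousAt
  have := h.const_mul (2 / Real.sqrt π)
  apply HasDerivAt.congr_of_eventuallyEq this
  filter_upwards with u
  rw [erf_eq]

lemma S_zero : (∑' k : ℕ, (0:ℝ)^(2*k+1) / Real.Gamma ((k:ℝ) + 3/2)) = 0 := by
  have e : (fun k : ℕ => (0:ℝ)^(2*k+1) / Real.Gamma ((k:ℝ) + 3/2)) = fun _ => (0:ℝ) := by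
    funext k
    simp
  rw [e, tsum_zero]

lemma S_eq_erf (z : ℝ) :
    (∑' k : ℕ, z^(2*k+1) / Real.Gamma ((k:ℝ) + 3/2)) = Real.exp (z^2) * erf z := by
  set S : ℝ → ℝ := fun y => ∑' k : ℕ, y^(2*k+1) / Real.Gamma ((k:ℝ) + 3/2) with hSdef
  set h : ℝ → ℝ := fun y => Real.exp (-y^2) * S y - erf y with hhdef
  have hderiv : ∀ y : ℝ, HasDerivAt h 0 y := by
    intro y
    have hS := hasDerivAt_S y
    have hexp : HasDerivAt (fun y : ℝ => Real.exp (-y^2)) (Real.exp (-y^2) * (-(2*y))) y := by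
      have h1 : HasDerivAt (fun y : ℝ => -y^2) (-(2*y)) y := by
        simpa using ((hasDerivAt_pow 2 y).fun_neg)
      exact h1.exp
    have herf := hasDerivAt_erf y
    have := (hexp.mul hS).sub herf
    refine this.congr_deriv ?_
    rw [S'_eq y]
    ring
  have hdiff : Differentiable ℝ h := fun y => (hderiv y).differentiableAt
  have hconst : h z = h 0 :=
    is_const_of_deriv_eq_zero hdiff (fun y => (hderiv y).deriv) z 0
  have h0 : h 0 = 0 := by
    simp [hhdef, hSdef, S_zero, erf_zero]
  rw [h0] at hconst
  have : Real.exp (-z^2) * S z = erf z := by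
    have := hconst
    simp only [hhdef] at this
    linarith
  have hx : Real.exp (z^2) * (Real.exp (-z^2) * S z) = Real.exp (z^2) * erf z := by rw [this]
  rwa [← mul_assoc, ← Real.exp_add, add_neg_cancel, Real.exp_zero, one_mul] at hx

lemma summable_T (w : ℝ) (hw : 0 ≤ w) :
    Summable (fun k : ℕ => w^k / Real.Gamma ((k:ℝ) + 3/2)) := by
  refine Summable.of_nonneg_of_le (fun k => by positivity) (fun k => ?_)
    ((Real.summable_pow_div_factorial w).mul_left (2 / Real.sqrt π))
  have h1 := Gamma_ge_factorial k
  have hG := Gamma_pos_aux k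
  have h3 : (0:ℝ) < (Nat.factorial k : ℝ) := by positivity
  have hsp : (0:ℝ) < Real.sqrt π := by positivity
  have e : 2 / Real.sqrt π * (w^k / (Nat.factorial k : ℝ))
      = w^k / ((Real.sqrt π / 2) * (Nat.factorial k : ℝ)) := by
    field_simp
  rw [e]
  gcongr

lemma summable_T_mul (w : ℝ) (hw : 0 ≤ w) (g : ℕ → ℝ) (hg0 : ∀ k, 0 ≤ g k)
    (hg1 : ∀ k, g k ≤ 1) : Summable (fun k : ℕ => w^k / Real.Gamma ((k:ℝ) + 3/2) * g k) := by
  refine Summable.of_nonneg_of_le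
    (fun k => mul_nonneg (div_nonneg (by positivity) (Gamma_pos_aux k).le) (hg0 k))
    (fun k => ?_) (summable_T w hw)
  have hG := Gamma_pos_aux k
  calc w^k / Real.Gamma ((k:ℝ) + 3/2) * g k ≤ w^k / Real.Gamma ((k:ℝ) + 3/2) * 1 :=
        mul_le_mul_of_nonneg_left (hg1 k) (by positivity)
    _ = _ := by ring

lemma summable_F_mul (w : ℝ) (hw : 0 ≤ w) (g : ℕ → ℝ) (hg0 : ∀ k, 0 ≤ g k)
    (hg1 : ∀ k, g k ≤ 1) : Summable (fun k : ℕ => w^k / (Nat.factorial k : ℝ) * g k) := by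
  refine Summable.of_nonneg_of_le
    (fun k => mul_nonneg (by positivity) (hg0 k))
    (fun k => ?_) (Real.summable_pow_div_factorial w)
  have h3 : (0:ℝ) < (Nat.factorial k : ℝ) := by positivity
  calc w^k / (Nat.factorial k : ℝ) * g k ≤ w^k / (Nat.factorial k : ℝ) * 1 :=
        mul_le_mul_of_nonneg_left (hg1 k) (by positivity)
    _ = _ := by ring

end Aux

theorem Rnt_series_rep (n x δ : ℝ) (hn : 0 < n) (hx : 0 < x)
    (y : ℝ) (hy : y = x^2 / (n + x^2)) :
    Rnt n x δ =
      (1/2) * Real.exp (-δ^2/2) *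
        ∑' j : ℕ, (-δ / Real.sqrt 2) ^ j / Real.Gamma ((j : ℝ)/2 + 1) *
          regIncBeta (1 - y) (n/2) ((1 + (j : ℝ))/2) := by
  have hx2 : 0 < x^2 := by positivity
  have hnx : 0 < n + x^2 := by positivity
  have hy0 : 0 < y := by rw [hy]; positivity
  have hy1 : y < 1 := by rw [hy, div_lt_one hnx]; linarith
  have hn2 : 0 < n/2 := by linarith
  have hw : (0:ℝ) ≤ δ^2/2 := by positivity
  have hz2 : (δ / Real.sqrt 2)^2 = δ^2/2 := by
    rw [div_pow, Real.sq_sqrt (by norm_num : (0:ℝ) ≤ 2)]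
  set c : ℝ := δ^2/2 with hc
  set z : ℝ := δ / Real.sqrt 2 with hzdef
  set f : ℕ → ℝ := fun j => (-δ / Real.sqrt 2) ^ j / Real.Gamma ((j : ℝ)/2 + 1) *
      regIncBeta (1 - y) (n/2) ((1 + (j : ℝ))/2) with hfdef
  -- I-bounds
  have hIP0 : ∀ k : ℕ, 0 ≤ regIncBeta y ((k:ℝ)+1/2) (n/2) := fun k =>
    regIncBeta_nonneg (by positivity) hn2 hy0.le hy1.le
  have hIP1 : ∀ k : ℕ, regIncBeta y ((k:ℝ)+1/2) (n/2) ≤ 1 := fun k =>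
    regIncBeta_le_one (by positivity) hn2 hy0.le hy1.le
  have hIQ0 : ∀ k : ℕ, 0 ≤ regIncBeta y ((k:ℝ)+1) (n/2) := fun k =>
    regIncBeta_nonneg (by positivity) hn2 hy0.le hy1.le
  have hIQ1 : ∀ k : ℕ, regIncBeta y ((k:ℝ)+1) (n/2) ≤ 1 := fun k =>
    regIncBeta_le_one (by positivity) hn2 hy0.le hy1.le
  -- even terms
  have hfe : ∀ k : ℕ, f (2*k) = c^k / (Nat.factorial k : ℝ)
      - c^k / (Nat.factorial k : ℝ) * regIncBeta y ((k:ℝ)+1/2) (n/2) := by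
    intro k
    have h1 : ((2*k : ℕ):ℝ)/2 + 1 = ((k:ℕ):ℝ) + 1 := by push_cast; ring
    have h2 : (1 + ((2*k : ℕ):ℝ))/2 = ((k:ℝ)+1/2) := by push_cast; ring
    have h3 : (-δ / Real.sqrt 2) ^ (2*k) = c^k := by
      rw [pow_mul, neg_div, neg_pow, hz2]
      simp [← hc]
    have h4 : regIncBeta (1-y) (n/2) ((k:ℝ)+1/2)
        = 1 - regIncBeta y ((k:ℝ)+1/2) (n/2) :=
      regIncBeta_compl (by positivity) hn2 hy0.le hy1.le
    simp only [hfdef, h1, h2, h3, h4, Real.Gamma_nat_eq_factorial]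
    ring
  -- odd terms
  have hfo : ∀ k : ℕ, f (2*k+1) = -(z^(2*k+1) / Real.Gamma ((k:ℝ)+3/2))
      + (c^k / Real.Gamma ((k:ℝ)+3/2) * regIncBeta y ((k:ℝ)+1) (n/2)) * z := by
    intro k
    have h1 : ((2*k+1 : ℕ):ℝ)/2 + 1 = ((k:ℝ) + 3/2) := by push_cast; ring
    have h2 : (1 + ((2*k+1 : ℕ):ℝ))/2 = ((k:ℝ)+1) := by push_cast; ring
    have h3 : (-δ / Real.sqrt 2) ^ (2*k+1) = -(z^(2*k+1)) := by
      rw [neg_div, neg_pow]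
      simp [pow_succ]
      rw [hzdef]
    have h5 : z^(2*k+1) = c^k * z := by
      rw [pow_succ, pow_mul, hz2]
    have h4 : regIncBeta (1-y) (n/2) ((k:ℝ)+1)
        = 1 - regIncBeta y ((k:ℝ)+1) (n/2) :=
      regIncBeta_compl (by positivity) hn2 hy0.le hy1.le
    simp only [hfdef, h1, h2, h3, h4]
    rw [h5]
    ring
  -- summabilities
  have sA : Summable (fun k : ℕ => c^k / (Nat.factorial k : ℝ)
      * regIncBeta y ((k:ℝ)+1/2) (n/2)) := summable_F_mul c hw _ hIP0 hIP1
  have sC : Summable (fun k : ℕ => c^k / (Nat.factorial k : ℝ)) :=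
    Real.summable_pow_div_factorial c
  have sB : Summable (fun k : ℕ => c^k / Real.Gamma ((k:ℝ)+3/2)
      * regIncBeta y ((k:ℝ)+1) (n/2)) := summable_T_mul c hw _ hIQ0 hIQ1
  have sS : Summable (fun k : ℕ => z^(2*k+1) / Real.Gamma ((k:ℝ)+3/2)) := summable_S z
  have se : Summable (fun k : ℕ => f (2*k)) := by
    rw [summable_congr hfe]
    exact sC.sub sA
  have so : Summable (fun k : ℕ => f (2*k+1)) := by
    rw [summable_congr hfo]
    exact sS.neg.add (sB.mul_right z)
  -- tsum of f
  have htsum : (∑' j, f j) = (∑' k, f (2*k)) + ∑' k, f (2*k+1) :=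
    (se.hasSum.even_add_odd so.hasSum).tsum_eq
  have hte : (∑' k, f (2*k)) = Real.exp c
      - ∑' k : ℕ, c^k / (Nat.factorial k : ℝ) * regIncBeta y ((k:ℝ)+1/2) (n/2) := by
    rw [tsum_congr hfe, Summable.tsum_sub sC sA, ← Real.exp_tsum]
  have hto : (∑' k, f (2*k+1)) = -(Real.exp c * erf z)
      + (∑' k : ℕ, c^k / Real.Gamma ((k:ℝ)+3/2) * regIncBeta y ((k:ℝ)+1) (n/2)) * z := by
    rw [tsum_congr hfo, Summable.tsum_add sS.neg (sB.mul_right z), tsum_neg, tsum_mul_right,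
      S_eq_erf z, hz2]
  -- unfold everything
  rw [Rnt, Pnt, Qnt, ← hy, htsum, hte, hto]
  have hexpc : Real.exp (-c) * Real.exp c = 1 := by
    rw [← Real.exp_add]; simp
  have herf : erf z = 1 - erfc z := rfl
  have hQrw : (∑' j : ℕ, (δ / Real.sqrt 2) * ((δ^2/2)^j / Real.Gamma ((j : ℝ) + 3/2)) *
      regIncBeta y ((j : ℝ) + 1) (n/2))
      = z * ∑' k : ℕ, c^k / Real.Gamma ((k:ℝ)+3/2) * regIncBeta y ((k:ℝ)+1) (n/2) := by
    rw [← tsum_mul_left]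
    apply tsum_congr
    intro k
    ring
  have hPrw : (∑' j : ℕ, ((δ^2/2)^j / (Nat.factorial j : ℝ)) *
      regIncBeta y ((j : ℝ) + 1/2) (n/2))
      = ∑' k : ℕ, c^k / (Nat.factorial k : ℝ) * regIncBeta y ((k:ℝ)+1/2) (n/2) := rfl
  rw [hQrw, hPrw]
  have hec : -δ^2/2 = -c := by rw [hc]; ring
  rw [hec, herf]
  linear_combination (-(1:ℝ)/2) * erfc z * hexpc
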